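/- For all n ≥ 0, R̄_{4,3}(12n+11) ≡ 0 (mod 8). -/

import Mathlib

/-- Number of overpartitions of `n` in which no part is divisible by `l` or by `m`
(an overpartition is a partition where the first occurrence of each part size may be
overlined, so each partition contributes `2 ^ (number of distinct part sizes)`). -/
def Rbar (l m n : ℕ) : ℕ :=
  ∑ p : Nat.Partition n,
    if ∀ i ∈ p.parts, ¬ l ∣ i ∧ ¬ m ∣ i then 2 ^ p.parts.toFinset.card else 0

namespace RbarAux

open Finset Multiset

/-- allowed part sizes -/
def ok (a : ℕ) : Prop := ¬ 4 ∣ a ∧ ¬ 3 ∣ a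

instance : DecidablePred ok := fun _ => instDecidableAnd

lemma ok_pos {a : ℕ} (h : ok a) : 0 < a := by
  rcases Nat.eq_zero_or_pos a with h0 | h0
  · exact absurd (h0 ▸ dvd_zero 4) h.1
  · exact h0

/-- quadruples (a, x, b, y) with a·x + b·y = N, x y positive, a b allowed -/
def quads (N : ℕ) : Finset (ℕ × ℕ × ℕ × ℕ) :=
  ((Finset.range (N+1)) ×ˢ (Finset.range (N+1)) ×ˢ (Finset.range (N+1)) ×ˢ
      (Finset.range (N+1))).filter
    fun q => ok q.1 ∧ ok q.2.2.1 ∧ 0 < q.2.1 ∧ 0 < q.2.2.2 ∧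
      q.1 * q.2.1 + q.2.2.1 * q.2.2.2 = N

lemma mem_quads {N : ℕ} {q : ℕ × ℕ × ℕ × ℕ} :
    q ∈ quads N ↔ ok q.1 ∧ ok q.2.2.1 ∧ 0 < q.2.1 ∧ 0 < q.2.2.2 ∧
      q.1 * q.2.1 + q.2.2.1 * q.2.2.2 = N := by
  obtain ⟨a, x, b, y⟩ := q
  simp only [quads, Finset.mem_filter, Finset.mem_product, Finset.mem_range]
  constructor
  · tauto
  · rintro ⟨ha, hb, hx, hy, hsum⟩
    refine ⟨⟨?_, ?_, ?_, ?_⟩, ha, hb, hx, hy, hsum⟩ <;>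
      simp only [Nat.lt_succ_iff]
    · calc a ≤ a * x := Nat.le_mul_of_pos_right a hx
        _ ≤ N := by omega
    · calc x ≤ a * x := Nat.le_mul_of_pos_left x (ok_pos ha)
        _ ≤ N := by omega
    · calc b ≤ b * y := Nat.le_mul_of_pos_right b hy
        _ ≤ N := by omega
    · calc y ≤ b * y := Nat.le_mul_of_pos_left y (ok_pos hb)
        _ ≤ N := by omega

section parts

variable (N : ℕ)

/-- partitions with parts allowed -/
def allowedP {N : ℕ} (p : Nat.Partition N) : Prop :=
  ∀ i ∈ p.parts, ¬ (4:ℕ) ∣ i ∧ ¬ (3:ℕ) ∣ i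

instance {N : ℕ} : DecidablePred (allowedP (N := N)) := fun p => by
  unfold allowedP; infer_instance

/-- allowed partitions with exactly one distinct part size -/
def Aset : Finset (Nat.Partition N) :=
  Finset.univ.filter fun p => allowedP p ∧ p.parts.toFinset.card = 1

/-- allowed partitions with exactly two distinct part sizes -/
def Bset : Finset (Nat.Partition N) :=
  Finset.univ.filter fun p => allowedP p ∧ p.parts.toFinset.card = 2

end parts

/-- the partition with N/a parts all equal to a (junk otherwise) -/
def onePart (N a : ℕ) : Nat.Partition N :=
  if h : 0 < a ∧ a ∣ N then
    { parts := Multiset.replicate (N / a) a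
      parts_pos := fun hi => (Multiset.eq_of_mem_replicate hi) ▸ h.1
      parts_sum := by
        rw [Multiset.sum_replicate, smul_eq_mul, Nat.div_mul_cancel h.2] }
  else default

lemma onePart_parts {N a : ℕ} (h1 : 0 < a) (h2 : a ∣ N) :
    (onePart N a).parts = Multiset.replicate (N / a) a := by
  rw [onePart, dif_pos ⟨h1, h2⟩]

/-- the partition with x parts equal to a and y parts equal to b (junk otherwise) -/
def twoPart (N : ℕ) (q : ℕ × ℕ × ℕ × ℕ) : Nat.Partition N :=
  if h : 0 < q.1 ∧ 0 < q.2.2.1 ∧ q.1 * q.2.1 + q.2.2.1 * q.2.2.2 = N then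
    { parts := Multiset.replicate q.2.1 q.1 + Multiset.replicate q.2.2.2 q.2.2.1
      parts_pos := by
        intro i hi
        rcases Multiset.mem_add.1 hi with hi | hi
        · exact (Multiset.eq_of_mem_replicate hi) ▸ h.1
        · exact (Multiset.eq_of_mem_replicate hi) ▸ h.2.1
      parts_sum := by
        rw [Multiset.sum_add, Multiset.sum_replicate, Multiset.sum_replicate,
          smul_eq_mul, smul_eq_mul, mul_comm q.2.1 q.1, mul_comm q.2.2.2 q.2.2.1]
        exact h.2.2 }
  else default

lemma twoPart_parts {N : ℕ} {q : ℕ × ℕ × ℕ × ℕ}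
    (h : 0 < q.1 ∧ 0 < q.2.2.1 ∧ q.1 * q.2.1 + q.2.2.1 * q.2.2.2 = N) :
    (twoPart N q).parts
      = Multiset.replicate q.2.1 q.1 + Multiset.replicate q.2.2.2 q.2.2.1 := by
  rw [twoPart, dif_pos h]

lemma hN_facts {n N : ℕ} (h : N = 12 * n + 11) :
    N % 2 = 1 ∧ N % 3 = 2 ∧ N % 4 = 3 ∧ 0 < N := by omega

/-- divisors of N are allowed parts -/
lemma ok_of_dvd {N a : ℕ} (h2 : N % 2 = 1) (h3 : N % 3 = 2) (ha : a ∣ N) : ok a := by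
  constructor
  · intro hc
    have : (2:ℕ) ∣ N := dvd_trans (by norm_num) (dvd_trans hc ha)
    omega
  · intro hc
    have : (3:ℕ) ∣ N := dvd_trans hc ha
    omega

lemma toFinset_replicate' {k a : ℕ} (h : 0 < k) :
    (Multiset.replicate k a).toFinset = {a} := by
  ext x; simp [Multiset.mem_replicate, h.ne']

lemma parts_decomp_one {N : ℕ} {p : Nat.Partition N} {a : ℕ}
    (h : p.parts.toFinset = {a}) :
    p.parts = Multiset.replicate p.parts.card a := by
  rw [Multiset.eq_replicate_card]
  intro b hb
  have hb' : b ∈ p.parts.toFinset := Multiset.mem_toFinset.2 hb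
  rw [h, Finset.mem_singleton] at hb'
  exact hb'

lemma parts_decomp_two {N : ℕ} {p : Nat.Partition N} {a b : ℕ} (hab : a ≠ b)
    (h : p.parts.toFinset = {a, b}) :
    p.parts = Multiset.replicate (p.parts.count a) a
      + Multiset.replicate (p.parts.count b) b := by
  conv_lhs => rw [← Multiset.toFinset_sum_count_nsmul_eq p.parts]
  rw [h, Finset.sum_pair hab, Multiset.nsmul_singleton, Multiset.nsmul_singleton]

lemma sup_pair {a b : ℕ} (hba : b < a) : ({a, b} : Finset ℕ).sup id = a := by
  rw [Finset.sup_insert, Finset.sup_singleton]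
  simp only [id_eq]
  omega

lemma erase_pair {a b : ℕ} (hab : a ≠ b) : ({a, b} : Finset ℕ).erase a = {b} := by
  rw [Finset.erase_insert]
  simp [hab]

lemma A_card {N : ℕ} (h2 : N % 2 = 1) (h3 : N % 3 = 2) (h0 : 0 < N) :
    (Aset N).card = N.divisors.card := by
  refine Finset.card_nbij' (fun p => p.parts.toFinset.sup id) (fun a => onePart N a)
    ?_ ?_ ?_ ?_
  · intro p hp
    dsimp only
    simp only [Aset, Finset.mem_coe, Finset.mem_filter, Finset.mem_univ, true_and] at hp
    obtain ⟨a, ha⟩ := Finset.card_eq_one.1 hp.2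
    rw [ha, Finset.sup_singleton, id_eq]
    have hsum := p.parts_sum
    rw [parts_decomp_one ha, Multiset.sum_replicate, smul_eq_mul] at hsum
    exact Nat.mem_divisors.2 ⟨Dvd.intro_left _ hsum, by omega⟩
  · intro a ha
    rw [Finset.mem_coe, Nat.mem_divisors] at ha
    have hap : 0 < a := Nat.pos_of_dvd_of_pos ha.1 h0
    have hparts := onePart_parts hap ha.1
    have hdp : 0 < N / a := Nat.div_pos (Nat.le_of_dvd h0 ha.1) hap
    simp only [Aset, Finset.mem_coe, Finset.mem_filter, Finset.mem_univ, true_and]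
    constructor
    · intro i hi
      rw [hparts] at hi
      rw [Multiset.eq_of_mem_replicate hi]
      exact ok_of_dvd h2 h3 ha.1
    · rw [hparts, toFinset_replicate' hdp]
      exact Finset.card_singleton a
  · intro p hp
    dsimp only
    simp only [Aset, Finset.mem_coe, Finset.mem_filter, Finset.mem_univ, true_and] at hp
    obtain ⟨a, ha⟩ := Finset.card_eq_one.1 hp.2
    have hsum := p.parts_sum
    rw [parts_decomp_one ha, Multiset.sum_replicate, smul_eq_mul] at hsum
    have hain : a ∈ p.parts := by
      rw [← Multiset.mem_toFinset, ha]; exact Finset.mem_singleton_self a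
    have hap : 0 < a := p.parts_pos hain
    have hdvd : a ∣ N := Dvd.intro_left _ hsum
    have hdiv : N / a = p.parts.card := Nat.div_eq_of_eq_mul_left hap hsum.symm
    apply Nat.Partition.ext
    rw [ha, Finset.sup_singleton, id_eq, onePart_parts hap hdvd, hdiv]
    exact (parts_decomp_one ha).symm
  · intro a ha
    dsimp only
    rw [Finset.mem_coe, Nat.mem_divisors] at ha
    have hap : 0 < a := Nat.pos_of_dvd_of_pos ha.1 h0
    have hdp : 0 < N / a := Nat.div_pos (Nat.le_of_dvd h0 ha.1) hap
    rw [onePart_parts hap ha.1, toFinset_replicate' hdp, Finset.sup_singleton, id_eq]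

lemma B_card {N : ℕ} (h2 : N % 2 = 1) (h3 : N % 3 = 2) (h0 : 0 < N) :
    ((quads N).filter fun q => q.2.2.1 < q.1).card = (Bset N).card := by
  refine Finset.card_nbij' (fun q => twoPart N q)
    (fun p => (p.parts.toFinset.sup id, p.parts.count (p.parts.toFinset.sup id),
      (p.parts.toFinset.erase (p.parts.toFinset.sup id)).sup id,
      p.parts.count ((p.parts.toFinset.erase (p.parts.toFinset.sup id)).sup id)))
    ?_ ?_ ?_ ?_
  · rintro ⟨a, x, b, y⟩ hq
    dsimp only
    simp only [Finset.mem_coe, Finset.mem_filter, mem_quads] at hq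
    obtain ⟨⟨ha, hb, hx, hy, hs⟩, hba⟩ := hq
    have hparts := twoPart_parts (q := (a, x, b, y)) ⟨ok_pos ha, ok_pos hb, hs⟩
    dsimp only at hparts hba
    simp only [Bset, Finset.mem_coe, Finset.mem_filter, Finset.mem_univ, true_and]
    constructor
    · intro i hi
      rw [hparts] at hi
      rcases Multiset.mem_add.1 hi with hi | hi <;>
        rw [Multiset.eq_of_mem_replicate hi]
      · exact ha
      · exact hb
    · rw [hparts, Multiset.toFinset_add, toFinset_replicate' hx,
        toFinset_replicate' hy, ← Finset.insert_eq]
      exact Finset.card_pair (by omega)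
  · intro p hp
    dsimp only
    simp only [Bset, Finset.mem_coe, Finset.mem_filter, Finset.mem_univ, true_and] at hp
    obtain ⟨a', b', hne, hab'⟩ := Finset.card_eq_two.1 hp.2
    obtain ⟨a, b, hba, hab⟩ : ∃ a b, b < a ∧ p.parts.toFinset = {a, b} := by
      rcases hne.lt_or_gt with h' | h'
      · exact ⟨b', a', h', by rw [hab', Finset.pair_comm]⟩
      · exact ⟨a', b', h', hab'⟩
    have hsup : p.parts.toFinset.sup id = a := by rw [hab]; exact sup_pair hba
    have herase : (p.parts.toFinset.erase a).sup id = b := by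
      rw [hab, erase_pair (by omega : a ≠ b), Finset.sup_singleton, id_eq]
    have hain : a ∈ p.parts := by
      rw [← Multiset.mem_toFinset, hab]; exact Finset.mem_insert_self a _
    have hbin : b ∈ p.parts := by
      rw [← Multiset.mem_toFinset, hab]
      exact Finset.mem_insert_of_mem (Finset.mem_singleton_self b)
    have hsum := p.parts_sum
    rw [parts_decomp_two (by omega) hab, Multiset.sum_add, Multiset.sum_replicate,
      Multiset.sum_replicate, smul_eq_mul, smul_eq_mul] at hsum
    have hsum' : a * p.parts.count a + b * p.parts.count b = N := by
      rw [mul_comm a, mul_comm b]; exact hsum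
    simp only [Finset.mem_coe, Finset.mem_filter, mem_quads, hsup, herase]
    exact ⟨⟨hp.1 a hain, hp.1 b hbin, Multiset.count_pos.2 hain,
      Multiset.count_pos.2 hbin, hsum'⟩, hba⟩
  · rintro ⟨a, x, b, y⟩ hq
    dsimp only
    simp only [Finset.mem_coe, Finset.mem_filter, mem_quads] at hq
    obtain ⟨⟨ha, hb, hx, hy, hs⟩, hba⟩ := hq
    have hparts := twoPart_parts (q := (a, x, b, y)) ⟨ok_pos ha, ok_pos hb, hs⟩
    dsimp only at hparts
    have htf : (twoPart N (a, x, b, y)).parts.toFinset = {a, b} := by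
      rw [hparts, Multiset.toFinset_add, toFinset_replicate' hx,
        toFinset_replicate' hy, ← Finset.insert_eq]
    have hsup : (twoPart N (a, x, b, y)).parts.toFinset.sup id = a := by
      rw [htf]; exact sup_pair hba
    have herase : ((twoPart N (a, x, b, y)).parts.toFinset.erase a).sup id = b := by
      rw [htf, erase_pair (by omega : a ≠ b), Finset.sup_singleton, id_eq]
    have hca : (twoPart N (a, x, b, y)).parts.count a = x := by
      rw [hparts, Multiset.count_add, Multiset.count_replicate_self,
        Multiset.count_replicate, if_neg (by omega : ¬ b = a), Nat.add_zero]
    have hcb : (twoPart N (a, x, b, y)).parts.count b = y := by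
      rw [hparts, Multiset.count_add, Multiset.count_replicate_self,
        Multiset.count_replicate, if_neg (by omega : ¬ a = b), Nat.zero_add]
    rw [hsup, herase, hca, hcb]
  · intro p hp
    dsimp only
    simp only [Bset, Finset.mem_coe, Finset.mem_filter, Finset.mem_univ, true_and] at hp
    obtain ⟨a', b', hne, hab'⟩ := Finset.card_eq_two.1 hp.2
    obtain ⟨a, b, hba, hab⟩ : ∃ a b, b < a ∧ p.parts.toFinset = {a, b} := by
      rcases hne.lt_or_gt with h' | h'
      · exact ⟨b', a', h', by rw [hab', Finset.pair_comm]⟩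
      · exact ⟨a', b', h', hab'⟩
    have hsup : p.parts.toFinset.sup id = a := by rw [hab]; exact sup_pair hba
    have herase : (p.parts.toFinset.erase a).sup id = b := by
      rw [hab, erase_pair (by omega : a ≠ b), Finset.sup_singleton, id_eq]
    have hain : a ∈ p.parts := by
      rw [← Multiset.mem_toFinset, hab]; exact Finset.mem_insert_self a _
    have hbin : b ∈ p.parts := by
      rw [← Multiset.mem_toFinset, hab]
      exact Finset.mem_insert_of_mem (Finset.mem_singleton_self b)
    have hsum := p.parts_sum
    rw [parts_decomp_two (by omega) hab, Multiset.sum_add, Multiset.sum_replicate,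
      Multiset.sum_replicate, smul_eq_mul, smul_eq_mul] at hsum
    have hcond : (0:ℕ) < a ∧ (0:ℕ) < b ∧
        a * p.parts.count a + b * p.parts.count b = N := by
      refine ⟨p.parts_pos hain, p.parts_pos hbin, ?_⟩
      rw [mul_comm a, mul_comm b]; exact hsum
    apply Nat.Partition.ext
    rw [hsup, herase]
    rw [twoPart_parts (q := (a, p.parts.count a, b, p.parts.count b)) hcond]
    exact (parts_decomp_two (by omega) hab).symm

lemma T_card (N : ℕ) :
    ((quads N).filter fun q => q.1 ≠ q.2.2.1).card
      = ((quads N).filter fun q => q.2.2.1 < q.1).card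
        + ((quads N).filter fun q => q.1 < q.2.2.1).card := by
  rw [← Finset.card_filter_add_card_filter_not
    (s := (quads N).filter fun q => q.1 ≠ q.2.2.1) (p := fun q => q.2.2.1 < q.1),
    Finset.filter_filter, Finset.filter_filter]
  congr 1
  · congr 1; apply Finset.filter_congr; intro q _; simp only [ne_eq]; omega
  · congr 1; apply Finset.filter_congr; intro q _; simp only [ne_eq]; omega

lemma T_halves (N : ℕ) :
    ((quads N).filter fun q => q.2.2.1 < q.1).card
      = ((quads N).filter fun q => q.1 < q.2.2.1).card := by
  refine Finset.card_nbij' (fun q => (q.2.2.1, q.2.2.2, q.1, q.2.1))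
    (fun q => (q.2.2.1, q.2.2.2, q.1, q.2.1)) ?_ ?_ (fun q _ => rfl) (fun q _ => rfl)
  all_goals
    intro q hq
    simp only [Finset.mem_coe, Finset.mem_filter, mem_quads] at *
    obtain ⟨⟨ha, hb, hx, hy, hs⟩, hlt⟩ := hq
    exact ⟨⟨hb, ha, hy, hx, by omega⟩, hlt⟩

lemma S_split (N : ℕ) :
    (quads N).card = ((quads N).filter fun q => q.1 ≠ q.2.2.1).card
      + ((quads N).filter fun q => q.1 = q.2.2.1).card := by
  rw [← Finset.card_filter_add_card_filter_not
    (s := quads N) (p := fun q => q.1 ≠ q.2.2.1)]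
  simp only [ne_eq, not_not]

lemma sigma_split {N : ℕ} (h2 : N % 2 = 1) (h3 : N % 3 = 2) (h0 : 0 < N) :
    ∑ a ∈ N.divisors, a
      = ((quads N).filter fun q => q.1 = q.2.2.1).card + N.divisors.card := by
  have hstep1 : ∑ a ∈ N.divisors, a = ∑ a ∈ N.divisors, N / a :=
    (Nat.sum_div_divisors N id).symm
  have hstep2 : ∑ a ∈ N.divisors, N / a
      = (N.divisors.sigma fun a => Finset.range (N / a)).card := by
    rw [Finset.card_sigma]
    simp
  rw [hstep1, hstep2,
    ← Finset.card_filter_add_card_filter_not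
      (s := N.divisors.sigma fun a => Finset.range (N / a)) (p := fun x => x.2 ≠ 0)]
  congr 1
  · -- nonzero part ↔ Dset
    refine Finset.card_nbij' (fun x => (x.1, x.2, x.1, N / x.1 - x.2))
      (fun q => ⟨q.1, q.2.1⟩) ?_ ?_ ?_ ?_
    · rintro ⟨a, t⟩ hx
      simp only [Finset.mem_coe, Finset.mem_filter, Finset.mem_sigma, Nat.mem_divisors,
        Finset.mem_range] at hx
      obtain ⟨⟨⟨hd, hN0⟩, ht⟩, htne⟩ := hx
      have hap : 0 < a := Nat.pos_of_dvd_of_pos hd h0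
      have hq : a * (N / a) = N := Nat.mul_div_cancel' hd
      have hok : ok a := ok_of_dvd h2 h3 hd
      simp only [Finset.mem_coe, Finset.mem_filter, mem_quads]
      refine ⟨⟨hok, hok, by omega, by omega, ?_⟩, trivial⟩
      have hsum : t + (N / a - t) = N / a := by omega
      calc a * t + a * (N / a - t) = a * (t + (N / a - t)) := by ring
        _ = N := by rw [hsum, hq]
    · intro q hq
      simp only [Finset.mem_coe, Finset.mem_filter, mem_quads] at hq
      obtain ⟨⟨ha, hb, hx, hy, hs⟩, heq⟩ := hq
      have hap : 0 < q.1 := ok_pos ha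
      have hN : q.1 * (q.2.1 + q.2.2.2) = N := by
        have hq2 : q.1 * q.2.2.2 = q.2.2.1 * q.2.2.2 := by rw [heq]
        rw [Nat.mul_add, hq2]; exact hs
      have hdvd : q.1 ∣ N := ⟨q.2.1 + q.2.2.2, hN.symm⟩
      have hdiv : N / q.1 = q.2.1 + q.2.2.2 := by
        rw [← hN]; exact Nat.mul_div_cancel_left _ hap
      simp only [Finset.mem_coe, Finset.mem_filter, Finset.mem_sigma, Nat.mem_divisors, Finset.mem_range]
      exact ⟨⟨⟨hdvd, by omega⟩, by omega⟩, by omega⟩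
    · rintro ⟨a, t⟩ hx
      rfl
    · intro q hq
      simp only [Finset.mem_coe, Finset.mem_filter, mem_quads] at hq
      obtain ⟨⟨ha, hb, hx, hy, hs⟩, heq⟩ := hq
      have hap : 0 < q.1 := ok_pos ha
      have hN : q.1 * (q.2.1 + q.2.2.2) = N := by
        have hq2 : q.1 * q.2.2.2 = q.2.2.1 * q.2.2.2 := by rw [heq]
        rw [Nat.mul_add, hq2]; exact hs
      have hdvd : q.1 ∣ N := ⟨q.2.1 + q.2.2.2, hN.symm⟩
      have hdiv : N / q.1 = q.2.1 + q.2.2.2 := by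
        rw [← hN]; exact Nat.mul_div_cancel_left _ hap
      have : N / q.1 - q.2.1 = q.2.2.2 := by omega
      ext <;> simp [← heq, this]
  · -- zero part ↔ divisors
    refine Finset.card_nbij' (fun x => x.1) (fun a => ⟨a, 0⟩) ?_ ?_ ?_ ?_
    · rintro ⟨a, t⟩ hx
      simp only [Finset.mem_coe, Finset.mem_filter, Finset.mem_sigma] at hx
      exact hx.1.1
    · intro a ha
      simp only [Finset.mem_coe, Finset.mem_filter, Finset.mem_sigma, Finset.mem_range, Nat.mem_divisors]
      simp only [Finset.mem_coe, Nat.mem_divisors] at ha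
      exact ⟨⟨ha, Nat.div_pos (Nat.le_of_dvd h0 ha.1) (Nat.pos_of_dvd_of_pos ha.1 h0)⟩,
        by simp⟩
    · rintro ⟨a, t⟩ hx
      simp only [Finset.mem_coe, Finset.mem_filter, not_not] at hx
      simp [hx.2]
    · intro a _
      rfl

lemma S_swap {N : ℕ} (h2 : N % 2 = 1) :
    ((quads N).filter fun q => 2 ∣ q.1 * q.2.1).card
      = ((quads N).filter fun q => ¬ 2 ∣ q.1 * q.2.1).card := by
  refine Finset.card_nbij' (fun q => (q.2.2.1, q.2.2.2, q.1, q.2.1))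
    (fun q => (q.2.2.1, q.2.2.2, q.1, q.2.1)) ?_ ?_ (fun q _ => rfl) (fun q _ => rfl) <;>
    intro q hq <;> simp only [Finset.mem_coe, Finset.mem_filter, mem_quads] at * <;>
    obtain ⟨⟨ha, hb, hx, hy, hs⟩, hpar⟩ := hq <;>
    refine ⟨⟨hb, ha, hy, hx, by omega⟩, by omega⟩

lemma S1_swap {N : ℕ} :
    (((quads N).filter fun q => 2 ∣ q.1 * q.2.1).filter fun q => 2 ∣ q.1).card
      = (((quads N).filter fun q => 2 ∣ q.1 * q.2.1).filter fun q => ¬ 2 ∣ q.1).card := by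
  refine Finset.card_nbij' (fun q => (q.1 / 2, 2 * q.2.1, q.2.2.1, q.2.2.2))
    (fun q => (2 * q.1, q.2.1 / 2, q.2.2.1, q.2.2.2)) ?_ ?_ ?_ ?_ <;>
    intro q hq <;>
    simp only [Finset.mem_coe, Finset.mem_filter, mem_quads] at * <;>
    obtain ⟨⟨⟨ha, hb, hx, hy, hs⟩, hax⟩, hpa⟩ := hq
  · -- even a side maps to odd side
    obtain ⟨c, hc⟩ := hpa
    have hc2 : ¬ 2 ∣ c := fun h => ha.1 (by obtain ⟨e, he⟩ := h; exact ⟨e, by omega⟩)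
    have hdiv : q.1 / 2 = c := by omega
    have hmul : q.1 / 2 * (2 * q.2.1) = q.1 * q.2.1 := by
      rw [hdiv, hc]; ring
    refine ⟨⟨⟨⟨fun h => hc2 (by rw [hdiv] at h; omega), fun h => ha.2 ?_⟩, hb,
      by omega, hy, by omega⟩, by omega⟩, by omega⟩
    · rw [hdiv] at h; exact Dvd.dvd.trans h ⟨2, by omega⟩
  · -- odd a side maps to even side
    have h2x : 2 ∣ q.2.1 := (Nat.Prime.dvd_mul Nat.prime_two).1 hax |>.resolve_left hpa
    obtain ⟨e, he⟩ := h2x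
    have hmul : 2 * q.1 * (q.2.1 / 2) = q.1 * q.2.1 := by
      rw [he, Nat.mul_div_cancel_left e (by norm_num)]; ring
    refine ⟨⟨⟨⟨fun h => hpa ?_, fun h => ha.2 ?_⟩, hb, by omega, hy, by omega⟩,
      by omega⟩, ⟨q.1, by ring⟩⟩
    · obtain ⟨e', he'⟩ := h; exact ⟨e', by omega⟩
    · rcases (Nat.Prime.dvd_mul Nat.prime_three).1 h with h | h
      · omega
      · exact h
  · -- round trip even side
    obtain ⟨c, hc⟩ := hpa
    have : q.1 / 2 = c := by omega
    ext <;> simp <;> omega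
  · -- round trip odd side
    have h2x : 2 ∣ q.2.1 := (Nat.Prime.dvd_mul Nat.prime_two).1 hax |>.resolve_left hpa
    obtain ⟨e, he⟩ := h2x
    ext <;> simp <;> omega

lemma four_dvd_S {N : ℕ} (h2 : N % 2 = 1) : 4 ∣ (quads N).card := by
  have ha := Finset.card_filter_add_card_filter_not
    (s := quads N) (p := fun q => 2 ∣ q.1 * q.2.1)
  have hb := Finset.card_filter_add_card_filter_not
    (s := (quads N).filter fun q => 2 ∣ q.1 * q.2.1) (p := fun q => 2 ∣ q.1)
  have h1 := S_swap h2
  have h3 := S1_swap (N := N)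
  omega

lemma sq_ne {N a : ℕ} (h4 : N % 4 = 3) : a * a ≠ N := by
  intro h
  rcases Nat.even_or_odd a with ⟨k, hk⟩ | ⟨k, hk⟩ <;> subst hk
  · have h1 : (k + k) * (k + k) = 4 * (k * k) := by ring
    rw [h1] at h; omega
  · have h1 : (2 * k + 1) * (2 * k + 1) = 4 * (k * k + k) + 1 := by ring
    rw [h1] at h; omega

lemma odd_mul_mod4 {a b : ℕ} (ha : a % 2 = 1) (hb : b % 2 = 1) (h : (a * b) % 4 = 3) :
    (a + b) % 4 = 0 := by
  obtain ⟨s, hs⟩ : ∃ s, a = 2 * s + 1 := ⟨a / 2, by omega⟩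
  obtain ⟨t, ht⟩ : ∃ t, b = 2 * t + 1 := ⟨b / 2, by omega⟩
  subst hs ht
  have h1 : (2 * s + 1) * (2 * t + 1) = 4 * (s * t) + 2 * s + 2 * t + 1 := by ring
  rw [h1] at h
  omega

lemma odd_of_dvd {N a : ℕ} (h2 : N % 2 = 1) (ha : a ∣ N) : a % 2 = 1 := by
  rcases Nat.even_or_odd a with ⟨k, hk⟩ | ⟨k, hk⟩
  · exfalso
    have : (2:ℕ) ∣ N := dvd_trans ⟨k, by omega⟩ ha
    omega
  · omega

lemma lt_div_of {N a : ℕ} (h0 : 0 < N) (hd : a ∣ N) (h : a * a < N) : a < N / a := by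
  have hap : 0 < a := Nat.pos_of_dvd_of_pos hd h0
  have hq : a * (N / a) = N := Nat.mul_div_cancel' hd
  by_contra hc
  push_neg at hc
  have := Nat.mul_le_mul_left a hc
  linarith

lemma div_lt_of {N a : ℕ} (h0 : 0 < N) (hd : a ∣ N) (h : N < a * a) : N / a < a := by
  have hap : 0 < a := Nat.pos_of_dvd_of_pos hd h0
  have hq : a * (N / a) = N := Nat.mul_div_cancel' hd
  by_contra hc
  push_neg at hc
  have := Nat.mul_le_mul_left a hc
  linarith

lemma memU_of_memL {N a : ℕ} (h0 : 0 < N) (hd : a ∣ N) (h : a * a < N) :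
    ¬ (N / a) * (N / a) < N := by
  have hq : a * (N / a) = N := Nat.mul_div_cancel' hd
  have h1 := lt_div_of h0 hd h
  have := Nat.mul_le_mul_right (N / a) (le_of_lt h1)
  omega

lemma memL_of_memU {N a : ℕ} (h0 : 0 < N) (h4 : N % 4 = 3) (hd : a ∣ N)
    (h : ¬ a * a < N) : (N / a) * (N / a) < N := by
  have hap : 0 < a := Nat.pos_of_dvd_of_pos hd h0
  have hq : a * (N / a) = N := Nat.mul_div_cancel' hd
  have hqp : 0 < N / a := Nat.div_pos (Nat.le_of_dvd h0 hd) hap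
  have hgt : N < a * a := lt_of_le_of_ne (le_of_not_gt h) (Ne.symm (sq_ne h4))
  have h1 := div_lt_of h0 hd hgt
  have := mul_lt_mul_of_pos_right h1 hqp
  linarith

lemma divisors_halves_card {N : ℕ} (h4 : N % 4 = 3) :
    (N.divisors.filter fun a => a * a < N).card
      = (N.divisors.filter fun a => ¬ a * a < N).card := by
  have h0 : 0 < N := by omega
  refine Finset.card_nbij' (fun a => N / a) (fun a => N / a) ?_ ?_ ?_ ?_ <;>
    intro a ha <;> simp only [Finset.mem_coe, Finset.mem_filter, Nat.mem_divisors] at *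
  · exact ⟨⟨Nat.div_dvd_of_dvd ha.1.1, ha.1.2⟩, memU_of_memL h0 ha.1.1 ha.2⟩
  · exact ⟨⟨Nat.div_dvd_of_dvd ha.1.1, ha.1.2⟩, memL_of_memU h0 h4 ha.1.1 ha.2⟩
  · exact Nat.div_div_self ha.1.1 (by omega)
  · exact Nat.div_div_self ha.1.1 (by omega)

lemma two_dvd_d {N : ℕ} (h4 : N % 4 = 3) : 2 ∣ N.divisors.card := by
  have key := divisors_halves_card h4
  have := Finset.card_filter_add_card_filter_not
    (s := N.divisors) (p := fun a => a * a < N)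
  omega

lemma four_dvd_sigma {N : ℕ} (h2 : N % 2 = 1) (h4 : N % 4 = 3) :
    4 ∣ ∑ a ∈ N.divisors, a := by
  have h0 : 0 < N := by omega
  rw [← Finset.sum_filter_add_sum_filter_not N.divisors (fun a => a * a < N)]
  have hswap : ∑ a ∈ N.divisors.filter (fun a => ¬ a * a < N), a
      = ∑ a ∈ N.divisors.filter (fun a => a * a < N), N / a := by
    refine Finset.sum_nbij' (i := fun a => N / a) (j := fun a => N / a) ?_ ?_ ?_ ?_ ?_ <;>
      intro a ha <;> simp only [Finset.mem_coe, Finset.mem_filter, Nat.mem_divisors] at *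
    · exact ⟨⟨Nat.div_dvd_of_dvd ha.1.1, ha.1.2⟩, memL_of_memU h0 h4 ha.1.1 ha.2⟩
    · exact ⟨⟨Nat.div_dvd_of_dvd ha.1.1, ha.1.2⟩, memU_of_memL h0 ha.1.1 ha.2⟩
    · exact Nat.div_div_self ha.1.1 (by omega)
    · exact Nat.div_div_self ha.1.1 (by omega)
    · exact (Nat.div_div_self ha.1.1 (by omega)).symm
  rw [hswap, ← Finset.sum_add_distrib]
  refine Finset.dvd_sum ?_
  intro a ha
  simp only [Finset.mem_coe, Finset.mem_filter, Nat.mem_divisors] at ha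
  obtain ⟨⟨hd, hN0⟩, _⟩ := ha
  have hq : a * (N / a) = N := Nat.mul_div_cancel' hd
  have h1 : a % 2 = 1 := odd_of_dvd h2 hd
  have h2' : (N / a) % 2 = 1 := odd_of_dvd h2 (Nat.div_dvd_of_dvd hd)
  have := odd_mul_mod4 h1 h2' (by rw [hq]; omega)
  omega

lemma cnt_ne_zero {N : ℕ} (h0 : 0 < N) (p : Nat.Partition N) :
    p.parts.toFinset.card ≠ 0 := by
  intro h
  have h1 : p.parts.toFinset = ∅ := Finset.card_eq_zero.1 h
  have h2 : p.parts = 0 := by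
    rwa [Multiset.toFinset_eq_empty] at h1
  have := p.parts_sum
  rw [h2] at this
  simp at this
  omega

lemma Rbar_mod {N : ℕ} (h0 : 0 < N) :
    Rbar 4 3 N % 8 = (2 * (Aset N).card + 4 * (Bset N).card) % 8 := by
  have hper : ∀ p : Nat.Partition N,
      (if ∀ i ∈ p.parts, ¬ (4:ℕ) ∣ i ∧ ¬ (3:ℕ) ∣ i then 2 ^ p.parts.toFinset.card else 0) % 8
        = ((if allowedP p ∧ p.parts.toFinset.card = 1 then 2 else 0)
          + (if allowedP p ∧ p.parts.toFinset.card = 2 then 4 else 0)) % 8 := by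
    intro p
    by_cases hall : ∀ i ∈ p.parts, ¬ (4:ℕ) ∣ i ∧ ¬ (3:ℕ) ∣ i
    · have hallP : allowedP p := hall
      rw [if_pos hall]
      have hc0 := cnt_ne_zero h0 p
      rcases Nat.lt_or_ge p.parts.toFinset.card 3 with hc | hc
      · have : p.parts.toFinset.card = 1 ∨ p.parts.toFinset.card = 2 := by omega
        rcases this with h | h <;> rw [h] <;> simp [hallP]
      · rw [if_neg (by omega), if_neg (by omega)]
        have h8 : (8:ℕ) ∣ 2 ^ p.parts.toFinset.card := by
          have := pow_dvd_pow 2 hc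
          simpa using this
        omega
    · have hallP : ¬ allowedP p := hall
      rw [if_neg hall, if_neg (by tauto), if_neg (by tauto)]
  have hsum : Rbar 4 3 N % 8
      = (∑ p : Nat.Partition N,
          ((if allowedP p ∧ p.parts.toFinset.card = 1 then 2 else 0)
            + (if allowedP p ∧ p.parts.toFinset.card = 2 then 4 else 0))) % 8 := by
    rw [Rbar, Finset.sum_nat_mod, Finset.sum_congr rfl (fun p _ => hper p),
      ← Finset.sum_nat_mod]
  rw [hsum, Finset.sum_add_distrib, ← Finset.sum_filter, ← Finset.sum_filter,
    Finset.sum_const, Finset.sum_const, smul_eq_mul, smul_eq_mul]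
  have e1 : (Finset.univ.filter fun p : Nat.Partition N =>
      allowedP p ∧ p.parts.toFinset.card = 1).card = (Aset N).card := rfl
  have e2 : (Finset.univ.filter fun p : Nat.Partition N =>
      allowedP p ∧ p.parts.toFinset.card = 2).card = (Bset N).card := rfl
  omega

end RbarAux

theorem Rbar_four_three_twelve_n_add_eleven_mod_eight (n : ℕ) : Rbar 4 3 (12 * n + 11) % 8 = 0 := by
  open RbarAux in
  set N := 12 * n + 11 with hNdef
  obtain ⟨h2, h3, h4, h0⟩ := hN_facts hNdef
  rw [Rbar_mod h0]
  have hA := A_card h2 h3 h0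
  have hB := B_card h2 h3 h0
  have hT := T_card N
  have hTh := T_halves N
  have hS := S_split N
  have hsig := sigma_split h2 h3 h0
  have h4S := four_dvd_S h2
  have h4sig := four_dvd_sigma h2 h4
  have h2d := two_dvd_d h4
  omega
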